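/- Let f : ℝᵐ → ℝ ∪ {∞} be proper, lsc, and μ-strongly convex, and let A ∈ ℝ^{p×m} with A ≠ 0. Then the epicomposition (A f)(s) := inf{ f(x) : Ax = s } is (μ/‖A‖²)-strongly convex on its domain, where ‖A‖ is the operator norm. -/

import Mathlib

open scoped RealInnerProductSpace
open Filter Topology

/-- The convex (Fenchel) conjugate of an extended-real-valued function. -/
noncomputable def eConj {n : ℕ} (h : EuclideanSpace ℝ (Fin n) → EReal)
    (y : EuclideanSpace ℝ (Fin n)) : EReal :=
  ⨆ x, ((⟪y, x⟫ : ℝ) : EReal) - h x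

/-- `h` is proper: nowhere `⊥` and not identically `⊤`. -/
def ProperFn {n : ℕ} (h : EuclideanSpace ℝ (Fin n) → EReal) : Prop :=
  (∃ x, h x ≠ ⊤) ∧ ∀ x, h x ≠ ⊥

/-- Convexity for extended-real-valued functions. -/
def EConvexOn {n : ℕ} (h : EuclideanSpace ℝ (Fin n) → EReal) : Prop :=
  ∀ x y : EuclideanSpace ℝ (Fin n), ∀ a b : ℝ, 0 ≤ a → 0 ≤ b → a + b = 1 →
    h (a • x + b • y) ≤ (a : EReal) * h x + (b : EReal) * h y

/-- `u ∈ prox_{γ h}(x)` for an extended-real-valued `h`. -/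
def IsProx {n : ℕ} (h : EuclideanSpace ℝ (Fin n) → EReal) (γ : ℝ)
    (x u : EuclideanSpace ℝ (Fin n)) : Prop :=
  ∀ w, h u + ((‖u - x‖ ^ 2 / (2 * γ) : ℝ) : EReal) ≤ h w + ((‖w - x‖ ^ 2 / (2 * γ) : ℝ) : EReal)

/-- `u = prox_{γ h}(x)` for a real-valued `h`. -/
def IsProxR {n : ℕ} (h : EuclideanSpace ℝ (Fin n) → ℝ) (γ : ℝ)
    (x u : EuclideanSpace ℝ (Fin n)) : Prop :=
  ∀ w, h u + ‖u - x‖ ^ 2 / (2 * γ) ≤ h w + ‖w - x‖ ^ 2 / (2 * γ)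

/-- The Moreau envelope `h^γ`. -/
noncomputable def moreauEnv {n : ℕ} (h : EuclideanSpace ℝ (Fin n) → EReal) (γ : ℝ)
    (x : EuclideanSpace ℝ (Fin n)) : EReal :=
  ⨅ w, h w + ((‖w - x‖ ^ 2 / (2 * γ) : ℝ) : EReal)

/-- The Douglas–Rachford envelope value at `s`, given the prox points `u, v`. -/
noncomputable def dre {n : ℕ} (φ₁ φ₂ : EuclideanSpace ℝ (Fin n) → EReal) (γ : ℝ)
    (s u v : EuclideanSpace ℝ (Fin n)) : EReal :=
  φ₁ u + φ₂ v + (((1 / γ) * ⟪s - u, v - u⟫ + ‖v - u‖ ^ 2 / (2 * γ) : ℝ) : EReal)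

/-- `v` belongs to the regular (Fréchet) subdifferential of `h` at `x̄`. -/
def RegSubdiffAt {n : ℕ} (h : EuclideanSpace ℝ (Fin n) → EReal)
    (xbar v : EuclideanSpace ℝ (Fin n)) : Prop :=
  ∀ ε : ℝ, 0 < ε → ∀ᶠ x in nhds xbar,
    h xbar + ((⟪v, x - xbar⟫ - ε * ‖x - xbar‖ : ℝ) : EReal) ≤ h x

/-- `μ`-strong convexity for extended-real-valued functions. -/
def EStrongConvexOn {n : ℕ} (μ : ℝ) (h : EuclideanSpace ℝ (Fin n) → EReal) : Prop :=
  EConvexOn (fun x => h x - ((μ / 2 * ‖x‖ ^ 2 : ℝ) : EReal))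

lemma ereal_exists_coe {X : EReal} (h1 : X ≠ ⊤) (h2 : X ≠ ⊥) : ∃ t : ℝ, X = (t : EReal) := by
  induction X using EReal.rec with
  | bot => exact absurd rfl h2
  | coe t => exact ⟨t, rfl⟩
  | top => exact absurd rfl h1

lemma ereal_mul_sub (a r : ℝ) (ha : 0 ≤ a) (X : EReal) :
    (a : EReal) * (X - (r : EReal)) = (a : EReal) * X - ((a * r : ℝ) : EReal) := by
  rcases ha.eq_or_lt with h | h
  · rw [← h]; simp
  · induction X using EReal.rec with
    | bot => rw [EReal.bot_sub, EReal.coe_mul_bot_of_pos h, EReal.bot_sub]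
    | coe x => norm_cast; ring
    | top => rw [EReal.top_sub_coe, EReal.coe_mul_top_of_pos h, EReal.top_sub_coe]

lemma ereal_sub_add_sub (X Y : EReal) (r s : ℝ) :
    (X - (r : EReal)) + (Y - (s : EReal)) = (X + Y) - (((r + s) : ℝ) : EReal) := by
  rw [sub_eq_add_neg, sub_eq_add_neg, sub_eq_add_neg, add_add_add_comm]
  congr 1
  norm_cast
  ring

lemma ereal_sub_add (X : EReal) (r s : ℝ) :
    X - (r : EReal) + (s : EReal) = X - (((r - s) : ℝ) : EReal) := by
  rw [sub_eq_add_neg, sub_eq_add_neg, add_assoc]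
  congr 1
  norm_cast
  ring

lemma ereal_sub_sub (X : EReal) (r s : ℝ) :
    X - (r : EReal) - (s : EReal) = X - (((r + s) : ℝ) : EReal) := by
  rw [sub_eq_add_neg, sub_eq_add_neg, sub_eq_add_neg, add_assoc]
  congr 1
  norm_cast
  ring

lemma ereal_le_of_forall_eps {X : EReal} {c : ℝ} (h : ∀ ε : ℝ, 0 < ε → X ≤ ((c + ε : ℝ) : EReal)) :
    X ≤ (c : EReal) := by
  by_contra hc
  push_neg at hc
  induction X using EReal.rec with
  | bot => exact absurd hc (by simp)
  | coe x =>
    have hx : c < x := by exact_mod_cast hc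
    have := h ((x - c) / 2) (by linarith)
    rw [EReal.coe_le_coe_iff] at this
    linarith
  | top => exact (EReal.coe_lt_top _).not_ge (h 1 one_pos)

lemma ereal_mul_ne_bot_of_pos {b : ℝ} (hb : 0 < b) {X : EReal} (hX : X ≠ ⊥) :
    (b : EReal) * X ≠ ⊥ := by
  induction X using EReal.rec with
  | bot => exact absurd rfl hX
  | coe x => rw [← EReal.coe_mul]; exact EReal.coe_ne_bot _
  | top => rw [EReal.coe_mul_top_of_pos hb]; simp

lemma norm_combo {n : ℕ} (a b : ℝ) (hab : a + b = 1) (x y : EuclideanSpace ℝ (Fin n)) :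
    ‖a • x + b • y‖ ^ 2 = a * ‖x‖ ^ 2 + b * ‖y‖ ^ 2 - a * b * ‖x - y‖ ^ 2 := by
  have hb : b = 1 - a := by linarith
  subst hb
  have h1 : ‖a • x + (1 - a) • y‖ ^ 2 = ⟪a • x + (1 - a) • y, a • x + (1 - a) • y⟫ :=
    (real_inner_self_eq_norm_sq _).symm
  have h2 : ‖x - y‖ ^ 2 = ⟪x - y, x - y⟫ := (real_inner_self_eq_norm_sq _).symm
  have h3 : ‖x‖ ^ 2 = ⟪x, x⟫ := (real_inner_self_eq_norm_sq _).symm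
  have h4 : ‖y‖ ^ 2 = ⟪y, y⟫ := (real_inner_self_eq_norm_sq _).symm
  rw [h1, h2, h3, h4]
  simp only [inner_add_add_self, inner_sub_sub_self, real_inner_smul_left, real_inner_smul_right]
  ring

lemma key_ineq {m : ℕ} {f : EuclideanSpace ℝ (Fin m) → EReal} {μ : ℝ}
    (hsc : EStrongConvexOn μ f) (x y : EuclideanSpace ℝ (Fin m)) (a b : ℝ)
    (ha : 0 ≤ a) (hb : 0 ≤ b) (hab : a + b = 1) :
    f (a • x + b • y) ≤ (a : EReal) * f x + (b : EReal) * f y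
      - ((a * b * (μ / 2) * ‖x - y‖ ^ 2 : ℝ) : EReal) := by
  have h := hsc x y a b ha hb hab
  dsimp only at h
  rw [ereal_mul_sub a _ ha, ereal_mul_sub b _ hb, ereal_sub_add_sub] at h
  have h2 : f (a • x + b • y) ≤ (a : EReal) * f x + (b : EReal) * f y
      - ((a * (μ / 2 * ‖x‖ ^ 2) + b * (μ / 2 * ‖y‖ ^ 2) : ℝ) : EReal)
      + ((μ / 2 * ‖a • x + b • y‖ ^ 2 : ℝ) : EReal) := by
    calc f (a • x + b • y)
        = f (a • x + b • y) - ((μ / 2 * ‖a • x + b • y‖ ^ 2 : ℝ) : EReal)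
          + ((μ / 2 * ‖a • x + b • y‖ ^ 2 : ℝ) : EReal) := EReal.sub_add_cancel.symm
      _ ≤ _ := add_le_add_left h _
  rw [ereal_sub_add] at h2
  have hr : a * (μ / 2 * ‖x‖ ^ 2) + b * (μ / 2 * ‖y‖ ^ 2) - μ / 2 * ‖a • x + b • y‖ ^ 2
      = a * b * (μ / 2) * ‖x - y‖ ^ 2 := by
    rw [norm_combo a b hab x y]; ring
  rwa [hr] at h2

lemma bdd_below {m : ℕ} {f : EuclideanSpace ℝ (Fin m) → EReal}
    (hproper : ProperFn f) (hlsc : LowerSemicontinuous f) {μ : ℝ} (hμ : 0 < μ)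
    (hkey : ∀ (x y : EuclideanSpace ℝ (Fin m)) (a b : ℝ), 0 ≤ a → 0 ≤ b → a + b = 1 →
      f (a • x + b • y) ≤ (a : EReal) * f x + (b : EReal) * f y
        - ((a * b * (μ / 2) * ‖x - y‖ ^ 2 : ℝ) : EReal)) :
    ∃ L : ℝ, ∀ x, (L : EReal) ≤ f x := by
  obtain ⟨⟨x₀, hx₀top⟩, hbot⟩ := hproper
  obtain ⟨t₀, ht₀⟩ := ereal_exists_coe hx₀top (hbot x₀)
  have hnear : ∀ᶠ z in nhds x₀, ((t₀ - 1 : ℝ) : EReal) < f z := by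
    apply hlsc x₀
    rw [ht₀]
    exact_mod_cast sub_one_lt t₀
  obtain ⟨δ, hδ, hball⟩ := Metric.eventually_nhds_iff.mp hnear
  refine ⟨t₀ - 1 - 4 / (μ * δ ^ 2), fun x => ?_⟩
  by_cases hxt : f x = ⊤
  · rw [hxt]; exact le_top
  obtain ⟨s, hs⟩ := ereal_exists_coe hxt (hbot x)
  rw [hs, EReal.coe_le_coe_iff]
  by_cases hclose : dist x x₀ < δ
  · have h1 : ((t₀ - 1 : ℝ) : EReal) < (s : EReal) := hs ▸ hball hclose
    have h2 : t₀ - 1 ≤ s := (EReal.coe_lt_coe_iff.mp h1).le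
    have h3 : 0 ≤ 4 / (μ * δ ^ 2) := by positivity
    linarith
  · push_neg at hclose
    set R := ‖x - x₀‖ with hR
    have hRδ : δ ≤ R := by rwa [dist_eq_norm] at hclose
    have hRpos : 0 < R := lt_of_lt_of_le hδ hRδ
    set t := δ / (2 * R) with ht
    have htpos : 0 < t := by positivity
    have hthalf : t ≤ 1 / 2 := by
      rw [ht, div_le_div_iff₀ (by positivity) (by norm_num)]
      linarith
    have h1t : 0 ≤ 1 - t := by linarith
    have habt : (1 - t) + t = 1 := by ring
    have hzx₀ : ((1 - t) • x₀ + t • x) - x₀ = t • (x - x₀) := by module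
    have hznear : dist ((1 - t) • x₀ + t • x) x₀ < δ := by
      rw [dist_eq_norm, hzx₀, norm_smul, Real.norm_eq_abs, abs_of_pos htpos, ← hR]
      have htR : t * R = δ / 2 := by rw [ht]; field_simp
      rw [htR]; linarith
    have hlow : ((t₀ - 1 : ℝ) : EReal) < f ((1 - t) • x₀ + t • x) := hball hznear
    have hup := hkey x₀ x (1 - t) t h1t htpos.le habt
    rw [ht₀, hs] at hup
    have hxy : ‖x₀ - x‖ = R := by rw [norm_sub_rev, ← hR]
    rw [hxy] at hup
    have hup' : f ((1 - t) • x₀ + t • x)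
        ≤ (((1 - t) * t₀ + t * s - (1 - t) * t * (μ / 2) * R ^ 2 : ℝ) : EReal) := by
      refine hup.trans_eq ?_
      norm_cast
    have hreal : t₀ - 1 < (1 - t) * t₀ + t * s - (1 - t) * t * (μ / 2) * R ^ 2 := by
      exact_mod_cast hlow.trans_le hup'
    -- divide by t
    have h5 : t₀ - 1 / t + (1 - t) * (μ / 2) * R ^ 2 ≤ s := by
      rw [← mul_le_mul_iff_of_pos_right htpos]
      have hdiv : 1 / t * t = 1 := one_div_mul_cancel htpos.ne'
      nlinarith [hreal, hdiv]
    have hinv : 1 / t = 2 * R / δ := by rw [ht, one_div_div]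
    have hquart : (μ / 4) * R ^ 2 ≤ (1 - t) * (μ / 2) * R ^ 2 := by
      nlinarith [mul_nonneg (by linarith : (0:ℝ) ≤ 1/2 - t) (by positivity : (0:ℝ) ≤ μ * R ^ 2)]
    have hfin : 0 ≤ (μ / 4) * R ^ 2 - (2 * R) / δ + 4 / (μ * δ ^ 2) := by
      have heq : (μ / 4) * R ^ 2 - (2 * R) / δ + 4 / (μ * δ ^ 2)
          = (μ * δ * R - 4) ^ 2 / (4 * μ * δ ^ 2) := by
        field_simp
        ring
      rw [heq]; positivity
    rw [hinv] at h5
    linarith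

set_option maxHeartbeats 1000000 in
/-- The epicomposition `(A f)(s) = inf{ f(x) : Ax = s }` of a `μ`-strongly convex function
is `(μ/‖A‖²)`-strongly convex. -/
theorem epicomposition_strongly_convex {m p : ℕ}
    (f : EuclideanSpace ℝ (Fin m) → EReal)
    (hproper : ProperFn f) (hlsc : LowerSemicontinuous f)
    (μ : ℝ) (hμ : 0 < μ) (hsc : EStrongConvexOn μ f)
    (A : EuclideanSpace ℝ (Fin m) →L[ℝ] EuclideanSpace ℝ (Fin p)) (hA : A ≠ 0) :
    EStrongConvexOn (μ / ‖A‖ ^ 2)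
      (fun s => ⨅ x : {x : EuclideanSpace ℝ (Fin m) // A x = s}, f x.val) := by
  have hAnorm : 0 < ‖A‖ := norm_pos_iff.mpr hA
  set c : ℝ := μ / ‖A‖ ^ 2 with hc
  have hcpos : 0 < c := by positivity
  obtain ⟨L, hL⟩ := bdd_below hproper hlsc hμ (fun x y a b ha hb hab =>
    key_ineq hsc x y a b ha hb hab)
  set g : EuclideanSpace ℝ (Fin p) → EReal :=
    fun s => ⨅ x : {x : EuclideanSpace ℝ (Fin m) // A x = s}, f x.val with hg
  have hgL : ∀ s, (L : EReal) ≤ g s := fun s => le_iInf fun x => hL x.1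
  have hgbot : ∀ s, g s ≠ ⊥ := fun s =>
    ((EReal.bot_lt_coe L).trans_le (hgL s)).ne'
  intro s₁ s₂ a b ha hb hab
  dsimp only
  -- main inequality
  have hmain : g (a • s₁ + b • s₂) ≤ (a : EReal) * g s₁ + (b : EReal) * g s₂
      - ((a * b * (c / 2) * ‖s₁ - s₂‖ ^ 2 : ℝ) : EReal) := by
    rcases ha.eq_or_lt with ha0 | hapos
    · have hb1 : b = 1 := by linarith
      rw [← ha0, hb1]
      simp [EReal.zero_mul, EReal.one_mul]
    rcases hb.eq_or_lt with hb0 | hbpos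
    · have ha1 : a = 1 := by linarith
      rw [← hb0, ha1]
      simp [EReal.zero_mul, EReal.one_mul]
    by_cases h1 : g s₁ = ⊤
    · rw [h1, EReal.coe_mul_top_of_pos hapos,
        EReal.top_add_of_ne_bot (ereal_mul_ne_bot_of_pos hbpos (hgbot s₂)),
        EReal.top_sub_coe]
      exact le_top
    by_cases h2 : g s₂ = ⊤
    · rw [h2, EReal.coe_mul_top_of_pos hbpos,
        EReal.add_top_of_ne_bot (ereal_mul_ne_bot_of_pos hapos (hgbot s₁)),
        EReal.top_sub_coe]
      exact le_top
    obtain ⟨v₁, hv₁⟩ := ereal_exists_coe h1 (hgbot s₁)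
    obtain ⟨v₂, hv₂⟩ := ereal_exists_coe h2 (hgbot s₂)
    rw [hv₁, hv₂]
    have hrhs : (a : EReal) * (v₁ : EReal) + (b : EReal) * (v₂ : EReal)
        - ((a * b * (c / 2) * ‖s₁ - s₂‖ ^ 2 : ℝ) : EReal)
        = ((a * v₁ + b * v₂ - a * b * (c / 2) * ‖s₁ - s₂‖ ^ 2 : ℝ) : EReal) := by
      norm_cast
    rw [hrhs]
    apply ereal_le_of_forall_eps
    intro ε hε
    -- find approximate minimizers
    have hlt₁ : (⨅ x : {x : EuclideanSpace ℝ (Fin m) // A x = s₁}, f x.val)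
        < ((v₁ + ε : ℝ) : EReal) := by
      have : g s₁ < ((v₁ + ε : ℝ) : EReal) := by
        rw [hv₁]; exact_mod_cast lt_add_of_pos_right v₁ hε
      rwa [hg] at this
    have hlt₂ : (⨅ x : {x : EuclideanSpace ℝ (Fin m) // A x = s₂}, f x.val)
        < ((v₂ + ε : ℝ) : EReal) := by
      have : g s₂ < ((v₂ + ε : ℝ) : EReal) := by
        rw [hv₂]; exact_mod_cast lt_add_of_pos_right v₂ hε
      rwa [hg] at this
    obtain ⟨⟨x, hx⟩, hfx⟩ := iInf_lt_iff.mp hlt₁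
    obtain ⟨⟨y, hy⟩, hfy⟩ := iInf_lt_iff.mp hlt₂
    obtain ⟨w₁, hw₁⟩ := ereal_exists_coe (ne_top_of_lt hfx) (hproper.2 x)
    obtain ⟨w₂, hw₂⟩ := ereal_exists_coe (ne_top_of_lt hfy) (hproper.2 y)
    have hw₁le : w₁ ≤ v₁ + ε := by
      rw [hw₁] at hfx; exact_mod_cast hfx.le
    have hw₂le : w₂ ≤ v₂ + ε := by
      rw [hw₂] at hfy; exact_mod_cast hfy.le
    have hz : A (a • x + b • y) = a • s₁ + b • s₂ := by
      rw [map_add, map_smul, map_smul, hx, hy]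
    -- norm comparison
    have hnorm : ‖s₁ - s₂‖ ≤ ‖A‖ * ‖x - y‖ := by
      have : s₁ - s₂ = A (x - y) := by rw [map_sub, hx, hy]
      rw [this]; exact A.le_opNorm _
    have hn2 : ‖s₁ - s₂‖ ^ 2 ≤ ‖A‖ ^ 2 * ‖x - y‖ ^ 2 := by
      nlinarith [norm_nonneg (s₁ - s₂), norm_nonneg (x - y), hnorm,
        mul_nonneg (norm_nonneg A) (norm_nonneg (x - y))]
    have hcc : c / 2 * ‖s₁ - s₂‖ ^ 2 ≤ μ / 2 * ‖x - y‖ ^ 2 := by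
      rw [hc, div_div, div_mul_eq_mul_div, div_le_iff₀ (by positivity)]
      nlinarith [hn2, hμ.le]
    have habc : a * b * (c / 2) * ‖s₁ - s₂‖ ^ 2 ≤ a * b * (μ / 2) * ‖x - y‖ ^ 2 := by
      nlinarith [mul_nonneg (mul_nonneg ha hb) (sub_nonneg.2 hcc)]
    have haw : a * w₁ ≤ a * v₁ + a * ε := by nlinarith [mul_nonneg ha (sub_nonneg.2 hw₁le)]
    have hbw : b * w₂ ≤ b * v₂ + b * ε := by nlinarith [mul_nonneg hb (sub_nonneg.2 hw₂le)]
    have hεab : a * ε + b * ε = ε := by rw [← add_mul, hab, one_mul]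
    calc g (a • s₁ + b • s₂)
        ≤ f (a • x + b • y) := by
          rw [hg]
          exact iInf_le (fun u : {u : EuclideanSpace ℝ (Fin m) // A u = a • s₁ + b • s₂} =>
            f u.val) ⟨a • x + b • y, hz⟩
      _ ≤ ((a * w₁ + b * w₂ - a * b * (μ / 2) * ‖x - y‖ ^ 2 : ℝ) : EReal) := by
          have hk := key_ineq hsc x y a b ha hb hab
          rw [hw₁, hw₂] at hk
          refine hk.trans_eq ?_
          norm_cast
      _ ≤ ((a * v₁ + b * v₂ - a * b * (c / 2) * ‖s₁ - s₂‖ ^ 2 + ε : ℝ) : EReal) := by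
          rw [EReal.coe_le_coe_iff]
          linarith
  -- conclude
  have heq : a * ((μ/‖A‖^2) / 2 * ‖s₁‖ ^ 2) + b * ((μ/‖A‖^2) / 2 * ‖s₂‖ ^ 2)
      = a * b * (c / 2) * ‖s₁ - s₂‖ ^ 2 + (μ/‖A‖^2) / 2 * ‖a • s₁ + b • s₂‖ ^ 2 := by
    rw [norm_combo a b hab s₁ s₂, hc]; ring
  calc g (a • s₁ + b • s₂) - (((μ/‖A‖^2) / 2 * ‖a • s₁ + b • s₂‖ ^ 2 : ℝ) : EReal)
      ≤ ((a : EReal) * g s₁ + (b : EReal) * g s₂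
          - ((a * b * (c / 2) * ‖s₁ - s₂‖ ^ 2 : ℝ) : EReal))
        - (((μ/‖A‖^2) / 2 * ‖a • s₁ + b • s₂‖ ^ 2 : ℝ) : EReal) := by
        rw [sub_eq_add_neg, sub_eq_add_neg]
        exact add_le_add_left hmain _
    _ = (a : EReal) * g s₁ + (b : EReal) * g s₂
        - ((a * (μ/‖A‖^2 / 2 * ‖s₁‖ ^ 2) + b * (μ/‖A‖^2 / 2 * ‖s₂‖ ^ 2) : ℝ) : EReal) := by
        rw [ereal_sub_sub]
        congr 2
        rw [heq]
    _ = (a : EReal) * (g s₁ - ((μ/‖A‖^2 / 2 * ‖s₁‖ ^ 2 : ℝ) : EReal))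
        + (b : EReal) * (g s₂ - ((μ/‖A‖^2 / 2 * ‖s₂‖ ^ 2 : ℝ) : EReal)) := by
        rw [ereal_mul_sub a _ ha, ereal_mul_sub b _ hb, ereal_sub_add_sub]
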